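/- Let σ > 0, 1 ≤ q ≤ ∞, δ > 0, and let f be a Schwartz function on ℝ. Then for λ ≫ 1, λ^{δ/2} ‖f‖_{L²(ℝ)} ≲ ‖f(·/λ^δ)‖_{B^σ_{2,q}(ℝ)} ≲ λ^{δ/2} ‖f‖_{B^σ_{2,q}(ℝ)}, with implicit constants independent of λ and f. -/

import Mathlib

open MeasureTheory ENNReal

/-- The `m`-th iterated finite difference `Δ_h^m`. -/
noncomputable def iterDiff (h : ℝ) (m : ℕ) (f : ℝ → ℂ) : ℝ → ℂ :=
  (fun g : ℝ → ℂ => fun x => g (x + h) - g x)^[m] f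

/-- The Besov norm `B^σ_{2,q}(ℝ)` via the finite-difference characterization (valid for
`0 < σ < m`):
`‖f‖_{L²} + (∫_0^1 t^{-σq} sup_{|h|≤t} ‖Δ_h^m f‖_{L²}^q dt/t)^{1/q}`, with
`sup_{h≠0} |h|^{-σ} ‖Δ_h^m f‖_{L²}` when `q = ∞`. -/
noncomputable def besovDiffNorm (σ : ℝ) (q : ℝ≥0∞) (m : ℕ) (f : ℝ → ℂ) : ℝ≥0∞ :=
  eLpNorm f 2 volume +
    if q = ⊤ then
      ⨆ (h : ℝ) (_ : h ≠ 0), ENNReal.ofReal (|h| ^ (-σ)) * eLpNorm (iterDiff h m f) 2 volume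
    else
      (∫⁻ t in Set.Ioo (0 : ℝ) 1,
          (ENNReal.ofReal (t ^ (-σ)) *
            ⨆ (h : ℝ) (_ : |h| ≤ t), eLpNorm (iterDiff h m f) 2 volume) ^ q.toReal /
            ENNReal.ofReal t) ^ (1 / q.toReal)

/-! ### Auxiliary lemmas -/

lemma iterDiff_succ' (h : ℝ) (m : ℕ) (f : ℝ → ℂ) :
    iterDiff h (m + 1) f = fun x => iterDiff h m f (x + h) - iterDiff h m f x := by
  simp only [iterDiff, Function.iterate_succ_apply']

lemma iterDiff_continuous (h : ℝ) (m : ℕ) {f : ℝ → ℂ} (hf : Continuous f) :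
    Continuous (iterDiff h m f) := by
  induction m with
  | zero => exact hf
  | succ n ih => rw [iterDiff_succ']; exact (ih.comp (by fun_prop)).sub ih

lemma iterDiff_comp_div (h : ℝ) (m : ℕ) (f : ℝ → ℂ) (s : ℝ) :
    iterDiff h m (fun x => f (x / s)) = fun x => iterDiff (h / s) m f (x / s) := by
  induction m with
  | zero => rfl
  | succ n ih =>
      rw [iterDiff_succ', ih, iterDiff_succ']
      funext x
      simp only
      rw [add_div]

lemma iterDiff_deriv (h : ℝ) (m : ℕ) {g : ℝ → ℂ} (hg : Differentiable ℝ g) :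
    Differentiable ℝ (iterDiff h m g) ∧
      deriv (iterDiff h m g) = iterDiff h m (deriv g) := by
  induction m with
  | zero => exact ⟨hg, rfl⟩
  | succ n ih =>
      obtain ⟨hd, he⟩ := ih
      have hshift : Differentiable ℝ (fun x => iterDiff h n g (x + h)) :=
        hd.comp (differentiable_id.add_const h)
      constructor
      · rw [iterDiff_succ']
        exact hshift.sub hd
      · rw [iterDiff_succ', iterDiff_succ' h n (deriv g)]
        funext x
        have h1 : HasDerivAt (fun x => iterDiff h n g (x + h))
            (deriv (iterDiff h n g) (x + h)) x :=
          HasDerivAt.comp_add_const x h (hd (x + h)).hasDerivAt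
        have := (h1.sub (hd x).hasDerivAt).deriv
        rw [show (fun x => iterDiff h n g (x + h) - iterDiff h n g x) =
          (fun x => iterDiff h n g (x + h)) - iterDiff h n g from rfl, this, he]

lemma iterDiff_zero_fun (h : ℝ) (m : ℕ) :
    iterDiff h m (fun _ => (0:ℂ)) = fun _ => (0:ℂ) := by
  induction m with
  | zero => rfl
  | succ n ih => rw [iterDiff_succ', ih]; funext x; simp

lemma inv_one_add_sq_bound {x y : ℝ} (hxy : |y - x| ≤ 1) :
    (1 + y ^ 2)⁻¹ ≤ 4 * (1 + x ^ 2)⁻¹ := by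
  have h1 : (0:ℝ) < 1 + x ^ 2 := by positivity
  have h2 : (0:ℝ) < 1 + y ^ 2 := by positivity
  have h3 : (y - x) ^ 2 ≤ 1 := by
    rw [← sq_abs]
    nlinarith [abs_nonneg (y - x)]
  rw [inv_eq_one_div, show (4:ℝ) * (1 + x ^ 2)⁻¹ = 4 / (1 + x ^ 2) by ring,
    div_le_div_iff₀ h2 h1]
  nlinarith [sq_nonneg (y - x), sq_nonneg (x + y), sq_nonneg (x - y)]

lemma schwartz_pointwise_decay (f : SchwartzMap ℝ ℂ) :
    ∃ D : ℝ, 0 ≤ D ∧ ∀ x : ℝ, ‖f x‖ ≤ D * (1 + x ^ 2)⁻¹ := by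
  obtain ⟨C0, hC0p, hC0⟩ := f.decay 0 0
  obtain ⟨C2, hC2p, hC2⟩ := f.decay 2 0
  refine ⟨C0 + C2, by positivity, fun x => ?_⟩
  have h1 : (0:ℝ) < 1 + x ^ 2 := by positivity
  have e0 := hC0 x
  have e2 := hC2 x
  simp only [pow_zero, one_mul, norm_iteratedFDeriv_zero, Real.norm_eq_abs, sq_abs] at e0 e2
  rw [mul_comm, inv_mul_eq_div, le_div_iff₀ h1]
  nlinarith [norm_nonneg (f x), sq_nonneg x]

lemma iterDiff_pointwise_bound (m : ℕ) (f : SchwartzMap ℝ ℂ) :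
    ∃ D : ℝ, 0 ≤ D ∧ ∀ h : ℝ, |h| ≤ 1 → ∀ x : ℝ,
      ‖iterDiff h m f x‖ ≤ D * |h| ^ m * (1 + x ^ 2)⁻¹ := by
  induction m generalizing f with
  | zero =>
      obtain ⟨D, hD, hbd⟩ := schwartz_pointwise_decay f
      exact ⟨D, hD, fun h _ x => by simpa [iterDiff] using hbd x⟩
  | succ n ih =>
      obtain ⟨D', hD', hbd⟩ := ih (SchwartzMap.derivCLM ℝ ℂ f)
      have hderiv : ⇑(SchwartzMap.derivCLM ℝ ℂ f) = deriv ⇑f := by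
        funext y; exact SchwartzMap.derivCLM_apply ℝ f y
      refine ⟨4 * D', by positivity, fun h hh x => ?_⟩
      have hx1 : (0:ℝ) < (1 + x ^ 2)⁻¹ := by positivity
      have hdiffble : Differentiable ℝ ⇑f := f.differentiable
      obtain ⟨hGdiff, hGderiv⟩ := iterDiff_deriv h n hdiffble
      set s : Set ℝ := Metric.closedBall x 1 with hs
      have key : ∀ y ∈ s, ‖deriv (iterDiff h n ⇑f) y‖ ≤
          D' * |h| ^ n * (4 * (1 + x ^ 2)⁻¹) := by
        intro y hy
        rw [hGderiv, ← hderiv]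
        calc ‖iterDiff h n (⇑(SchwartzMap.derivCLM ℝ ℂ f)) y‖
            ≤ D' * |h| ^ n * (1 + y ^ 2)⁻¹ := hbd h hh y
          _ ≤ D' * |h| ^ n * (4 * (1 + x ^ 2)⁻¹) := by
              have := inv_one_add_sq_bound (x := x) (y := y)
                (by simpa [Real.dist_eq] using (Metric.mem_closedBall.mp hy))
              have hpos : 0 ≤ D' * |h| ^ n := by positivity
              exact mul_le_mul_of_nonneg_left this hpos
      have hmvt := Convex.norm_image_sub_le_of_norm_deriv_le
        (f := iterDiff h n ⇑f) (s := s)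
        (hf := fun y _ => hGdiff y) (bound := key) (hs := convex_closedBall x 1)
        (Metric.mem_closedBall_self zero_le_one)
        (y := x + h) (by simp only [hs, Metric.mem_closedBall, Real.dist_eq,
          add_sub_cancel_left]; exact hh)
      rw [iterDiff_succ']
      simp only
      calc ‖iterDiff h n ⇑f (x + h) - iterDiff h n ⇑f x‖
          ≤ D' * |h| ^ n * (4 * (1 + x ^ 2)⁻¹) * ‖x + h - x‖ := hmvt
        _ = 4 * D' * |h| ^ (n + 1) * (1 + x ^ 2)⁻¹ := by
            rw [show x + h - x = h by ring, Real.norm_eq_abs, pow_succ]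
            ring

lemma map_div_volume {s : ℝ} (hs : 0 < s) :
    Measure.map (fun x : ℝ => x / s) volume = ENNReal.ofReal s • volume := by
  have e1 : (fun x : ℝ => x / s) = fun x => s⁻¹ * x := by funext x; rw [div_eq_inv_mul]
  rw [e1, Real.map_volume_mul_left (inv_ne_zero hs.ne'), inv_inv, abs_of_pos hs]

lemma eLpNorm_comp_div {g : ℝ → ℂ} (hg : AEStronglyMeasurable g volume) {s : ℝ} (hs : 0 < s) :
    eLpNorm (fun x => g (x / s)) 2 volume
      = ENNReal.ofReal (s ^ ((1:ℝ)/2)) * eLpNorm g 2 volume := by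
  have hmap := map_div_volume hs
  have hg' : AEStronglyMeasurable g (Measure.map (fun x : ℝ => x / s) volume) := by
    rw [hmap]
    exact hg.smul_measure _
  have h1 := eLpNorm_map_measure (p := 2) hg' (aemeasurable_id'.div_const s)
  rw [hmap] at h1
  rw [eLpNorm_smul_measure_of_ne_top (by norm_num : (2:ℝ≥0∞) ≠ ⊤)] at h1
  have h2 : ((1:ℝ≥0∞)/2).toReal = ((1:ℝ)/2) := by norm_num
  rw [h2] at h1
  have h3 : ENNReal.ofReal s ^ ((1:ℝ)/2) = ENNReal.ofReal (s ^ ((1:ℝ)/2)) := by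
    rw [← ENNReal.ofReal_rpow_of_pos hs]
  rw [h3] at h1
  rw [show (g ∘ fun x : ℝ => x / s) = fun x => g (x / s) from rfl] at h1
  rw [← h1, smul_eq_mul]

lemma eLpNorm_comp_add_right {g : ℝ → ℂ} (hg : AEStronglyMeasurable g volume) (h : ℝ) :
    eLpNorm (fun x => g (x + h)) 2 volume = eLpNorm g 2 volume := by
  have := eLpNorm_comp_measurePreserving (p := 2) hg (measurePreserving_add_right volume h)
  simpa [Function.comp_def] using this

noncomputable def wfun : ℝ → ℝ := fun x => (1 + x ^ 2)⁻¹

lemma wfun_memℒp : MemLp wfun 2 (volume : Measure ℝ) := by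
  have hw : AEStronglyMeasurable wfun volume := by
    apply Continuous.aestronglyMeasurable
    unfold wfun; fun_prop (disch := intros; positivity)
  rw [memLp_two_iff_integrable_sq hw]
  apply integrable_inv_one_add_sq.mono
  · apply (hw.aemeasurable.pow_const 2).aestronglyMeasurable
  · filter_upwards with x
    have h1 : (0:ℝ) < 1 + x ^ 2 := by positivity
    have h2 : (1:ℝ) ≤ 1 + x ^ 2 := by nlinarith
    unfold wfun
    rw [Real.norm_eq_abs, Real.norm_eq_abs, abs_of_pos (by positivity),
      abs_of_pos (by positivity : (0:ℝ) < (1+x^2)⁻¹)]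
    calc ((1 + x ^ 2)⁻¹) ^ 2 ≤ (1 + x ^ 2)⁻¹ ^ 1 := by
          apply pow_le_pow_of_le_one (by positivity) _ (by norm_num)
          rw [inv_le_one_iff₀]; right; exact h2
      _ = (1 + x ^ 2)⁻¹ := pow_one _

lemma eLpNorm_le_of_decay {g : ℝ → ℂ} {D : ℝ} (hD : 0 ≤ D)
    (hbd : ∀ x, ‖g x‖ ≤ D * (1 + x ^ 2)⁻¹) :
    eLpNorm g 2 volume ≤ ENNReal.ofReal (D * (eLpNorm wfun 2 volume).toReal) := by
  have hfin : eLpNorm wfun 2 volume ≠ ⊤ := wfun_memℒp.2.ne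
  have h1 : eLpNorm g 2 volume ≤ eLpNorm (D • wfun) 2 volume := by
    apply eLpNorm_mono
    intro x
    calc ‖g x‖ ≤ D * (1 + x ^ 2)⁻¹ := hbd x
      _ ≤ ‖(D • wfun) x‖ := by
          rw [Pi.smul_apply, smul_eq_mul, Real.norm_eq_abs, wfun]
          exact le_abs_self _
  refine h1.trans_eq ?_
  rw [eLpNorm_const_smul, ENNReal.ofReal_mul hD]
  congr 1
  · simp [Real.nnnorm_of_nonneg hD, Real.enorm_eq_ofReal hD, ENNReal.ofReal_eq_coe_nnreal hD]
  · rw [ENNReal.ofReal_toReal hfin]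

lemma eLpNorm_iterDiff_le (h : ℝ) (m : ℕ) {g : ℝ → ℂ} (hg : Continuous g) :
    eLpNorm (iterDiff h m g) 2 volume ≤ 2 ^ m * eLpNorm g 2 volume := by
  induction m with
  | zero => simp [iterDiff]
  | succ n ih =>
      rw [iterDiff_succ']
      have hc : Continuous (iterDiff h n g) := iterDiff_continuous h n hg
      have hshift : Continuous (fun x => iterDiff h n g (x + h)) :=
        hc.comp (by fun_prop)
      calc eLpNorm (fun x => iterDiff h n g (x + h) - iterDiff h n g x) 2 volume
          ≤ eLpNorm (fun x => iterDiff h n g (x + h)) 2 volume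
            + eLpNorm (iterDiff h n g) 2 volume :=
            eLpNorm_sub_le hshift.aestronglyMeasurable hc.aestronglyMeasurable one_le_two
        _ = eLpNorm (iterDiff h n g) 2 volume + eLpNorm (iterDiff h n g) 2 volume := by
            rw [eLpNorm_comp_add_right hc.aestronglyMeasurable]
        _ = 2 * eLpNorm (iterDiff h n g) 2 volume := by rw [two_mul]
        _ ≤ 2 * (2 ^ n * eLpNorm g 2 volume) := mul_le_mul_right ih 2
        _ = 2 ^ (n + 1) * eLpNorm g 2 volume := by rw [pow_succ]; ring

lemma lintegral_rpow_Ioo {γ : ℝ} (hγ : -1 < γ) :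
    ∫⁻ t in Set.Ioo (0:ℝ) 1, ENNReal.ofReal (t ^ γ)
      = ENNReal.ofReal (∫ t in Set.Ioo (0:ℝ) 1, t ^ γ) := by
  have hint : IntegrableOn (fun t : ℝ => t ^ γ) (Set.Ioo 0 1) volume := by
    have h1 := intervalIntegrable_iff.mp
      (intervalIntegral.intervalIntegrable_rpow' (a := 0) (b := 1) hγ)
    refine h1.mono_set ?_
    rw [Set.uIoc_of_le (by norm_num : (0:ℝ) ≤ 1)]
    exact Set.Ioo_subset_Ioc_self
  rw [← ofReal_integral_eq_lintegral_ofReal hint]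
  exact (ae_restrict_iff' measurableSet_Ioo).2
    (Filter.Eventually.of_forall fun t ht => Real.rpow_nonneg ht.1.le γ)

lemma besovDiffNorm_zero (σ : ℝ) (q : ℝ≥0∞) (hq : 1 ≤ q) (m : ℕ) :
    besovDiffNorm σ q m (fun _ => (0:ℂ)) = 0 := by
  unfold besovDiffNorm
  split_ifs with hqt
  · simp [iterDiff_zero_fun, eLpNorm_zero']
  · have hp : 0 < q.toReal := ENNReal.toReal_pos (one_pos.trans_le hq).ne' hqt
    simp [iterDiff_zero_fun, eLpNorm_zero', ENNReal.zero_rpow_of_pos hp,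
      ENNReal.zero_rpow_of_pos (by positivity : 0 < 1 / q.toReal)]
    exact hp

set_option maxHeartbeats 1600000 in
/-- For `σ > 0`, `1 ≤ q ≤ ∞`, `δ > 0` and `f` Schwartz, for `λ ≫ 1`:
`λ^{δ/2} ‖f‖_{L²} ≲ ‖f(·/λ^δ)‖_{B^σ_{2,q}} ≲ λ^{δ/2} ‖f‖_{B^σ_{2,q}}`,
with implicit constants independent of `λ` and `f`. -/
theorem besov_norm_dilation_bounds (σ : ℝ) (hσ : 0 < σ) (q : ℝ≥0∞) (hq : 1 ≤ q)
    (δ : ℝ) (hδ : 0 < δ) (m : ℕ) (hm : σ < m) :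
    ∃ c C : ℝ, 0 < c ∧ 0 < C ∧ ∀ f : SchwartzMap ℝ ℂ, ∃ Λ : ℝ, 1 ≤ Λ ∧
      ∀ lam : ℝ, Λ ≤ lam →
        ENNReal.ofReal (c * lam ^ (δ / 2)) * eLpNorm (f : ℝ → ℂ) 2 volume ≤
            besovDiffNorm σ q m (fun x => f (x / lam ^ δ)) ∧
          besovDiffNorm σ q m (fun x => f (x / lam ^ δ)) ≤
            ENNReal.ofReal (C * lam ^ (δ / 2)) * besovDiffNorm σ q m (f : ℝ → ℂ) := by
  have hm0 : (0:ℝ) < m := hσ.trans hm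
  have hmnat : m ≠ 0 := by
    intro h0
    rw [h0] at hm0
    norm_num at hm0
  have hCE : ENNReal.ofReal ((2:ℝ) ^ m + 2) = 2 ^ m + 2 := by
    rw [ENNReal.ofReal_add (by positivity) (by norm_num),
      ENNReal.ofReal_pow (by norm_num)]
    norm_num
  refine ⟨1, 2 ^ m + 2, one_pos, by positivity, fun f => ?_⟩
  set K : ℝ := (eLpNorm wfun 2 volume).toReal with hKdef
  have hK0 : 0 ≤ K := ENNReal.toReal_nonneg
  obtain ⟨D, hD0, hbd⟩ := iterDiff_pointwise_bound m f
  obtain ⟨D₀, hD₀0, hbd₀⟩ := schwartz_pointwise_decay f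
  have hffin : eLpNorm (⇑f) 2 volume ≠ ⊤ :=
    ((eLpNorm_le_of_decay hD₀0 hbd₀).trans_lt ENNReal.ofReal_lt_top).ne
  -- degenerate case: f = 0
  by_cases hf0 : eLpNorm (⇑f) 2 volume = 0
  · have hfz : ⇑f = fun _ => (0:ℂ) := by
      have := (eLpNorm_eq_zero_iff f.continuous.aestronglyMeasurable
        (by norm_num)).mp hf0
      exact (f.continuous.ae_eq_iff_eq volume continuous_const).mp this
    refine ⟨1, le_rfl, fun lam _ => ?_⟩
    have hcomp : (fun x => (f : ℝ → ℂ) (x / lam ^ δ)) = fun _ => (0:ℂ) := by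
      funext x
      exact congrFun hfz (x / lam ^ δ)
    rw [hcomp, besovDiffNorm_zero σ q hq m, hf0]
    simp
  -- main case
  have hε : 0 < (eLpNorm (⇑f) 2 volume).toReal := ENNReal.toReal_pos hf0 hffin
  set ε : ℝ := (eLpNorm (⇑f) 2 volume).toReal with hεdef
  set Jp : ℝ := (∫ t in Set.Ioo (0:ℝ) 1, t ^ (((m:ℝ) - σ) * q.toReal - 1)) ^ (1 / q.toReal)
    with hJpdef
  have hJp0 : 0 ≤ Jp :=
    Real.rpow_nonneg (setIntegral_nonneg measurableSet_Ioo
      (fun t ht => Real.rpow_nonneg ht.1.le _)) _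
  set M : ℝ := D * K * (1 + Jp) with hMdef
  have hM0 : 0 ≤ M := by positivity
  have hDKM : D * K ≤ M := by nlinarith
  set R : ℝ := max 1 (M / ε) with hRdef
  have hR1 : 1 ≤ R := le_max_left _ _
  have hR0 : (0:ℝ) ≤ R := by linarith
  refine ⟨R ^ (1 / δ), Real.one_le_rpow hR1 (by positivity), fun lam hlam => ?_⟩
  have hlam1 : 1 ≤ lam := (Real.one_le_rpow hR1 (by positivity)).trans hlam
  have hlam0 : 0 < lam := one_pos.trans_le hlam1
  set s : ℝ := lam ^ δ with hsdef
  have hs1 : 1 ≤ s := Real.one_le_rpow hlam1 hδ.le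
  have hs0 : 0 < s := one_pos.trans_le hs1
  have hsR : R ≤ s := by
    calc R = (R ^ (1 / δ)) ^ δ := by
          rw [← Real.rpow_mul hR0, one_div_mul_cancel hδ.ne', Real.rpow_one]
      _ ≤ lam ^ δ := Real.rpow_le_rpow (Real.rpow_nonneg hR0 _) hlam hδ.le
  have hMs : M / s ≤ ε := by
    have h1 : M / ε ≤ s := (le_max_right 1 (M / ε)).trans hsR
    rw [div_le_iff₀ hε] at h1
    rw [div_le_iff₀ hs0]
    linarith
  have hfove : ENNReal.ofReal (M / s) ≤ eLpNorm (⇑f) 2 volume := by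
    calc ENNReal.ofReal (M / s) ≤ ENNReal.ofReal ε := ENNReal.ofReal_le_ofReal hMs
      _ = eLpNorm (⇑f) 2 volume := ENNReal.ofReal_toReal hffin
  have hexp : lam ^ (δ / 2) = s ^ ((1:ℝ)/2) := by
    rw [hsdef, show δ / 2 = δ * ((1:ℝ)/2) by ring, Real.rpow_mul hlam0.le]
  have hsL2 : eLpNorm (fun x => (f : ℝ → ℂ) (x / s)) 2 volume
      = ENNReal.ofReal (s ^ ((1:ℝ)/2)) * eLpNorm (⇑f) 2 volume :=
    eLpNorm_comp_div f.continuous.aestronglyMeasurable hs0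
  have hkey : ∀ h : ℝ, eLpNorm (iterDiff h m (fun x => (f : ℝ → ℂ) (x / s))) 2 volume
      = ENNReal.ofReal (s ^ ((1:ℝ)/2)) * eLpNorm (iterDiff (h / s) m ⇑f) 2 volume := by
    intro h
    rw [iterDiff_comp_div h m (⇑f) s]
    exact eLpNorm_comp_div (iterDiff_continuous _ m f.continuous).aestronglyMeasurable hs0
  have hkey1 : ∀ h : ℝ, |h| ≤ 1 →
      eLpNorm (iterDiff (h / s) m ⇑f) 2 volume ≤ ENNReal.ofReal (D * K * (|h| ^ m / s)) := by
    intro h hh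
    have hhs : |h / s| ≤ 1 := by
      rw [abs_div, abs_of_pos hs0]
      exact (div_le_self (abs_nonneg h) hs1).trans hh
    have hb := eLpNorm_le_of_decay (g := iterDiff (h / s) m ⇑f)
      (D := D * |h / s| ^ m) (by positivity) (fun x => hbd (h / s) hhs x)
    refine hb.trans (ENNReal.ofReal_le_ofReal ?_)
    have e1 : |h / s| ^ m = |h| ^ m / s ^ m := by
      rw [abs_div, abs_of_pos hs0, div_pow]
    calc D * |h / s| ^ m * K = (D * K) * (|h| ^ m / s ^ m) := by rw [e1]; ring
      _ ≤ (D * K) * (|h| ^ m / s) := by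
          gcongr
          exact le_self_pow₀ hs1 hmnat
      _ = D * K * (|h| ^ m / s) := rfl
  have hkey2 : ∀ h : ℝ,
      eLpNorm (iterDiff (h / s) m ⇑f) 2 volume ≤ 2 ^ m * eLpNorm (⇑f) 2 volume :=
    fun h => eLpNorm_iterDiff_le _ m f.continuous
  constructor
  · -- lower bound
    rw [one_mul, hexp, ← hsL2]
    unfold besovDiffNorm
    exact le_self_add
  · -- upper bound
    have hbf : eLpNorm (⇑f) 2 volume ≤ besovDiffNorm σ q m ⇑f := by
      unfold besovDiffNorm
      exact le_self_add
    have hB : besovDiffNorm σ q m (fun x => (f : ℝ → ℂ) (x / s))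
        ≤ ENNReal.ofReal (s ^ ((1:ℝ)/2)) * eLpNorm (⇑f) 2 volume
          + ENNReal.ofReal (s ^ ((1:ℝ)/2)) * ((2 ^ m + 1) * eLpNorm (⇑f) 2 volume) := by
      unfold besovDiffNorm
      apply add_le_add hsL2.le
      split_ifs with hqt
      · -- q = ∞
        apply iSup_le
        intro h
        apply iSup_le
        intro hne
        rw [hkey h]
        rcases le_or_gt |h| 1 with hh | hh
        · have h0 : 0 < |h| := abs_pos.mpr hne
          have hreal : |h| ^ (-σ) * (D * K * (|h| ^ m / s)) ≤ M / s := by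
            have e1 : |h| ^ (-σ) * (|h| ^ m) = |h| ^ ((m:ℝ) - σ) := by
              rw [← Real.rpow_natCast |h| m, ← Real.rpow_add h0]
              congr 1
              ring
            have e2 : |h| ^ ((m:ℝ) - σ) ≤ 1 :=
              Real.rpow_le_one (abs_nonneg h) hh (by linarith)
            have e3 : |h| ^ (-σ) * (D * K * (|h| ^ m / s)) =
                (D * K / s) * (|h| ^ (-σ) * |h| ^ m) := by ring
            rw [e3, e1]
            calc (D * K / s) * |h| ^ ((m:ℝ) - σ) ≤ (D * K / s) * 1 :=
                  mul_le_mul_of_nonneg_left e2 (by positivity)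
              _ = D * K / s := mul_one _
              _ ≤ M / s := by gcongr
          calc ENNReal.ofReal (|h| ^ (-σ)) *
                (ENNReal.ofReal (s ^ ((1:ℝ)/2)) * eLpNorm (iterDiff (h / s) m ⇑f) 2 volume)
              ≤ ENNReal.ofReal (|h| ^ (-σ)) *
                (ENNReal.ofReal (s ^ ((1:ℝ)/2)) * ENNReal.ofReal (D * K * (|h| ^ m / s))) := by
                gcongr
                exact hkey1 h hh
            _ = ENNReal.ofReal (s ^ ((1:ℝ)/2)) *
                (ENNReal.ofReal (|h| ^ (-σ)) * ENNReal.ofReal (D * K * (|h| ^ m / s))) := by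
                ring
            _ = ENNReal.ofReal (s ^ ((1:ℝ)/2)) *
                ENNReal.ofReal (|h| ^ (-σ) * (D * K * (|h| ^ m / s))) := by
                rw [← ENNReal.ofReal_mul (Real.rpow_nonneg (abs_nonneg h) _)]
            _ ≤ ENNReal.ofReal (s ^ ((1:ℝ)/2)) * ENNReal.ofReal (M / s) := by
                gcongr
            _ ≤ ENNReal.ofReal (s ^ ((1:ℝ)/2)) * eLpNorm (⇑f) 2 volume := by
                gcongr
            _ ≤ ENNReal.ofReal (s ^ ((1:ℝ)/2)) * ((2 ^ m + 1) * eLpNorm (⇑f) 2 volume) := by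
                gcongr
                exact le_mul_of_one_le_left' le_add_self
        · have hone : ENNReal.ofReal (|h| ^ (-σ)) ≤ 1 := by
            rw [show (1:ℝ≥0∞) = ENNReal.ofReal 1 by simp]
            exact ENNReal.ofReal_le_ofReal
              (Real.rpow_le_one_of_one_le_of_nonpos hh.le (by linarith))
          calc ENNReal.ofReal (|h| ^ (-σ)) *
                (ENNReal.ofReal (s ^ ((1:ℝ)/2)) * eLpNorm (iterDiff (h / s) m ⇑f) 2 volume)
              ≤ 1 * (ENNReal.ofReal (s ^ ((1:ℝ)/2)) * (2 ^ m * eLpNorm (⇑f) 2 volume)) := by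
                gcongr
                exact hkey2 h
            _ = ENNReal.ofReal (s ^ ((1:ℝ)/2)) * (2 ^ m * eLpNorm (⇑f) 2 volume) := one_mul _
            _ ≤ ENNReal.ofReal (s ^ ((1:ℝ)/2)) * ((2 ^ m + 1) * eLpNorm (⇑f) 2 volume) := by
                gcongr
                exact le_self_add
      · -- q finite
        have hp1 : 1 ≤ q.toReal := by
          have := ENNReal.toReal_mono hqt hq
          simpa using this
        set p : ℝ := q.toReal with hpdef
        have hp0 : 0 < p := one_pos.trans_le hp1
        set γ : ℝ := ((m:ℝ) - σ) * p - 1 with hγdef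
        have hγ : -1 < γ := by
          have h1 : 0 < ((m:ℝ) - σ) * p := mul_pos (by linarith) hp0
          rw [hγdef]
          linarith
        set A : ℝ := s ^ ((1:ℝ)/2) * (D * K / s) with hAdef
        have hA0 : 0 ≤ A := by positivity
        set J : ℝ := ∫ t in Set.Ioo (0:ℝ) 1, t ^ γ with hJdef
        have hJ0 : 0 ≤ J :=
          setIntegral_nonneg measurableSet_Ioo (fun t ht => Real.rpow_nonneg ht.1.le _)
        have hint : ∀ t ∈ Set.Ioo (0:ℝ) 1,
            (ENNReal.ofReal (t ^ (-σ)) *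
              ⨆ (h : ℝ) (_ : |h| ≤ t),
                eLpNorm (iterDiff h m (fun x => (f : ℝ → ℂ) (x / s))) 2 volume) ^ p /
              ENNReal.ofReal t ≤ ENNReal.ofReal (A ^ p) * ENNReal.ofReal (t ^ γ) := by
          intro t ht
          have ht0 : 0 < t := ht.1
          have hS : (⨆ (h : ℝ) (_ : |h| ≤ t),
              eLpNorm (iterDiff h m (fun x => (f : ℝ → ℂ) (x / s))) 2 volume)
              ≤ ENNReal.ofReal (s ^ ((1:ℝ)/2) * (D * K * (t ^ m / s))) := by
            apply iSup_le
            intro h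
            apply iSup_le
            intro hht
            rw [hkey h]
            have h1 : |h| ≤ 1 := hht.trans ht.2.le
            calc ENNReal.ofReal (s ^ ((1:ℝ)/2)) * eLpNorm (iterDiff (h / s) m ⇑f) 2 volume
                ≤ ENNReal.ofReal (s ^ ((1:ℝ)/2)) * ENNReal.ofReal (D * K * (|h| ^ m / s)) := by
                  gcongr
                  exact hkey1 h h1
              _ ≤ ENNReal.ofReal (s ^ ((1:ℝ)/2)) * ENNReal.ofReal (D * K * (t ^ m / s)) := by
                  gcongr
              _ = ENNReal.ofReal (s ^ ((1:ℝ)/2) * (D * K * (t ^ m / s))) :=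
                  (ENNReal.ofReal_mul (by positivity)).symm
          have hre : (t ^ (-σ) * (s ^ ((1:ℝ)/2) * (D * K * (t ^ m / s)))) ^ p / t
              = A ^ p * t ^ γ := by
            have e1 : t ^ (-σ) * (s ^ ((1:ℝ)/2) * (D * K * (t ^ m / s)))
                = A * t ^ ((m:ℝ) - σ) := by
              rw [show (m:ℝ) - σ = -σ + (m:ℝ) by ring, Real.rpow_add ht0,
                Real.rpow_natCast, hAdef]
              ring
            rw [e1, Real.mul_rpow hA0 (Real.rpow_nonneg ht0.le _), ← Real.rpow_mul ht0.le,
              hγdef, Real.rpow_sub ht0, Real.rpow_one]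
            ring
          calc (ENNReal.ofReal (t ^ (-σ)) *
                ⨆ (h : ℝ) (_ : |h| ≤ t),
                  eLpNorm (iterDiff h m (fun x => (f : ℝ → ℂ) (x / s))) 2 volume) ^ p /
                ENNReal.ofReal t
              ≤ (ENNReal.ofReal (t ^ (-σ)) *
                  ENNReal.ofReal (s ^ ((1:ℝ)/2) * (D * K * (t ^ m / s)))) ^ p /
                ENNReal.ofReal t := by
                gcongr
            _ = ENNReal.ofReal (t ^ (-σ) * (s ^ ((1:ℝ)/2) * (D * K * (t ^ m / s)))) ^ p /
                ENNReal.ofReal t := by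
                rw [← ENNReal.ofReal_mul (Real.rpow_nonneg ht0.le _)]
            _ = ENNReal.ofReal ((t ^ (-σ) * (s ^ ((1:ℝ)/2) * (D * K * (t ^ m / s)))) ^ p) /
                ENNReal.ofReal t := by
                rw [ENNReal.ofReal_rpow_of_nonneg (by positivity) hp0.le]
            _ = ENNReal.ofReal ((t ^ (-σ) * (s ^ ((1:ℝ)/2) * (D * K * (t ^ m / s)))) ^ p / t) := by
                rw [← ENNReal.ofReal_div_of_pos ht0]
            _ = ENNReal.ofReal (A ^ p * t ^ γ) := by rw [hre]
            _ = ENNReal.ofReal (A ^ p) * ENNReal.ofReal (t ^ γ) :=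
                ENNReal.ofReal_mul (by positivity)
        calc (∫⁻ t in Set.Ioo (0 : ℝ) 1,
                (ENNReal.ofReal (t ^ (-σ)) *
                  ⨆ (h : ℝ) (_ : |h| ≤ t),
                    eLpNorm (iterDiff h m (fun x => (f : ℝ → ℂ) (x / s))) 2 volume) ^ p /
                  ENNReal.ofReal t) ^ (1 / p)
            ≤ (∫⁻ t in Set.Ioo (0:ℝ) 1,
                ENNReal.ofReal (A ^ p) * ENNReal.ofReal (t ^ γ)) ^ (1 / p) := by
              apply ENNReal.rpow_le_rpow _ (by positivity)
              exact setLIntegral_mono' measurableSet_Ioo hint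
          _ = (ENNReal.ofReal (A ^ p) * ∫⁻ t in Set.Ioo (0:ℝ) 1,
                ENNReal.ofReal (t ^ γ)) ^ (1 / p) := by
              rw [lintegral_const_mul' _ _ ENNReal.ofReal_ne_top]
          _ = (ENNReal.ofReal (A ^ p) * ENNReal.ofReal J) ^ (1 / p) := by
              rw [lintegral_rpow_Ioo hγ]
          _ = ENNReal.ofReal (A ^ p * J) ^ (1 / p) := by
              rw [← ENNReal.ofReal_mul (by positivity)]
          _ = ENNReal.ofReal ((A ^ p * J) ^ ((1:ℝ) / p)) :=
              ENNReal.ofReal_rpow_of_nonneg (by positivity) (by positivity)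
          _ = ENNReal.ofReal (A * Jp) := by
              rw [hJpdef, Real.mul_rpow (by positivity) hJ0, ← Real.rpow_mul hA0,
                mul_one_div_cancel hp0.ne', Real.rpow_one]
          _ ≤ ENNReal.ofReal (s ^ ((1:ℝ)/2)) * ((2 ^ m + 1) * eLpNorm (⇑f) 2 volume) := by
              have hAJp : A * Jp = s ^ ((1:ℝ)/2) * (D * K * Jp / s) := by
                rw [hAdef]
                ring
              rw [hAJp, ENNReal.ofReal_mul (by positivity)]
              gcongr
              calc ENNReal.ofReal (D * K * Jp / s) ≤ ENNReal.ofReal (M / s) := by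
                    apply ENNReal.ofReal_le_ofReal
                    gcongr
                    nlinarith [mul_nonneg (mul_nonneg hD0 hK0) hJp0]
                _ ≤ eLpNorm (⇑f) 2 volume := hfove
                _ ≤ (2 ^ m + 1) * eLpNorm (⇑f) 2 volume :=
                    le_mul_of_one_le_left' le_add_self
    calc besovDiffNorm σ q m (fun x => (f : ℝ → ℂ) (x / s))
        ≤ ENNReal.ofReal (s ^ ((1:ℝ)/2)) * eLpNorm (⇑f) 2 volume
          + ENNReal.ofReal (s ^ ((1:ℝ)/2)) * ((2 ^ m + 1) * eLpNorm (⇑f) 2 volume) := hB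
      _ = ENNReal.ofReal (s ^ ((1:ℝ)/2)) * ((2 ^ m + 2) * eLpNorm (⇑f) 2 volume) := by
          ring
      _ ≤ ENNReal.ofReal (s ^ ((1:ℝ)/2)) * ((2 ^ m + 2) * besovDiffNorm σ q m ⇑f) := by
          gcongr
      _ = ENNReal.ofReal (((2:ℝ) ^ m + 2) * lam ^ (δ / 2)) * besovDiffNorm σ q m ⇑f := by
          rw [hexp, ENNReal.ofReal_mul (by positivity), hCE]
          ring
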